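/- arXiv:1111.4648 — 6 statements merged into one kernel-verified Lean document; each statement's English description precedes it below -/
import Mathlib

section
/- There exists an absolute constant C such that for all integers a, b and every positive integer c, the generalized quadratic Gauss sum satisfies |G(a,b,c)| ≤ C · gcd(a,c)^{1/2} · c^{1/2}. -/
/-- The generalized quadratic Gauss sum `G(a,b,c) = ∑_{n=0}^{c-1} e((a n² + b n)/c)`,
where `e(x) = exp(2πix)`. -/
noncomputable def gaussSumG (a b : ℤ) (c : ℕ) : ℂ :=
  ∑ n ∈ Finset.range c,
    Complex.exp (2 * Real.pi * Complex.I * (((a : ℂ) * n ^ 2 + (b : ℂ) * n) / (c : ℂ)))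

open Finset

namespace GaussAux

noncomputable def e (c : ℕ) (n : ℤ) : ℂ :=
  Complex.exp (2 * Real.pi * Complex.I * ((n : ℂ) / (c : ℂ)))

lemma e_add (c : ℕ) (m n : ℤ) : e c (m + n) = e c m * e c n := by
  rw [e, e, e, ← Complex.exp_add]
  congr 1
  push_cast
  ring

lemma e_abs (c : ℕ) (n : ℤ) : ‖e c n‖ = 1 := by
  rw [e]
  have h : 2 * (Real.pi : ℂ) * Complex.I * ((n : ℂ) / (c : ℂ))
      = ((2 * Real.pi * n / c : ℝ) : ℂ) * Complex.I := by
    push_cast; ring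
  rw [h, Complex.norm_exp_ofReal_mul_I]

lemma e_conj (c : ℕ) (n : ℤ) : (starRingEnd ℂ) (e c n) = e c (-n) := by
  rw [e, e, ← Complex.exp_conj]
  congr 1
  simp only [map_mul, map_div₀, map_ofNat, Complex.conj_I, Complex.conj_ofReal, map_intCast, map_natCast]
  push_cast
  ring

lemma e_mul_c (c : ℕ) (hc : 0 < c) (k : ℤ) : e c ((c : ℤ) * k) = 1 := by
  rw [e]
  have hc0 : (c : ℂ) ≠ 0 := Nat.cast_ne_zero.mpr hc.ne'
  have : 2 * (Real.pi : ℂ) * Complex.I * ((((c : ℤ) * k : ℤ) : ℂ) / (c : ℂ))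
      = (k : ℂ) * (2 * Real.pi * Complex.I) := by
    push_cast
    field_simp
  rw [this, Complex.exp_int_mul_two_pi_mul_I]

lemma e_pow (c : ℕ) (k : ℤ) (m : ℕ) : e c (k * m) = (e c k) ^ m := by
  induction m with
  | zero => simp [e]
  | succ m ih =>
    have : k * ((m + 1 : ℕ) : ℤ) = k * m + k := by push_cast; ring
    rw [this, e_add, ih, pow_succ]

lemma sum_e_mul (c : ℕ) (hc : 0 < c) (k : ℤ) :
    ∑ m ∈ range c, e c (k * m) = if (c : ℤ) ∣ k then (c : ℂ) else 0 := by
  by_cases hdvd : (c : ℤ) ∣ k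
  · obtain ⟨j, rfl⟩ := hdvd
    rw [if_pos (dvd_mul_right (c : ℤ) j)]
    have : ∀ m ∈ range c, e c ((c : ℤ) * j * m) = 1 := by
      intro m _
      have : (c : ℤ) * j * m = (c : ℤ) * (j * m) := by ring
      rw [this, e_mul_c c hc]
    rw [Finset.sum_congr rfl this]
    simp
  · rw [if_neg hdvd]
    have hne : e c k ≠ 1 := by
      intro h1
      rw [e, Complex.exp_eq_one_iff] at h1
      obtain ⟨n, hn⟩ := h1
      have hc0 : (c : ℂ) ≠ 0 := Nat.cast_ne_zero.mpr hc.ne'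
      have hpi : (2 * (Real.pi : ℂ) * Complex.I) ≠ 0 := by
        simp [Real.pi_ne_zero, Complex.I_ne_zero, Complex.ofReal_ne_zero]
      have hkc : (k : ℂ) = n * c := by
        field_simp at hn
        have h2 : 2 * (Real.pi : ℂ) * Complex.I * (k : ℂ) = 2 * (Real.pi : ℂ) * Complex.I * ((n : ℂ) * c) := by
          linear_combination (2 * (Real.pi : ℂ) * Complex.I) * hn
        exact mul_left_cancel₀ hpi h2
      have : (k : ℤ) = n * c := by exact_mod_cast hkc
      exact hdvd ⟨n, by linarith [this]⟩
    have hpow : (e c k) ^ c = 1 := by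
      rw [← e_pow]
      have : k * (c : ℤ) = (c : ℤ) * k := by ring
      rw [this, e_mul_c c hc]
    have := geom_sum_mul (e c k) c
    rw [hpow, sub_self] at this
    have hsum : (∑ m ∈ range c, e c k ^ m) = 0 :=
      (mul_eq_zero.mp this).resolve_right (sub_ne_zero.mpr hne)
    calc ∑ m ∈ range c, e c (k * m) = ∑ m ∈ range c, (e c k) ^ m :=
          Finset.sum_congr rfl fun m _ => e_pow c k m
      _ = 0 := hsum

lemma shift_sum (c : ℕ) (f : ℕ → ℂ) (hf : ∀ n, f (n + c) = f n) (m : ℕ) :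
    ∑ n ∈ range c, f (n + m) = ∑ n ∈ range c, f n := by
  induction m with
  | zero => simp
  | succ m ih =>
    set g : ℕ → ℂ := fun n => f (n + m) with hg
    have hgc : g c = g 0 := by
      simp only [hg]
      have : c + m = m + c := by ring
      rw [this, hf m, Nat.zero_add]
    have h1 := Finset.sum_range_succ' g c
    have h2 := Finset.sum_range_succ g c
    have key : ∑ n ∈ range c, g (n + 1) = ∑ n ∈ range c, g n := by
      have := h1.symm.trans h2
      linear_combination this + hgc
    have : ∑ n ∈ range c, f (n + (m + 1)) = ∑ n ∈ range c, g (n + 1) := by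
      apply Finset.sum_congr rfl; intro n _; simp only [hg]; congr 1; ring
    rw [this, key, ih]

lemma mul_conj_eq (a b : ℤ) (c : ℕ) (hc : 0 < c) :
    gaussSumG a b c * (starRingEnd ℂ) (gaussSumG a b c)
      = ∑ h ∈ range c, e c (a * h ^ 2 + b * h) *
          (if (c : ℤ) ∣ 2 * a * h then (c : ℂ) else 0) := by
  have hG : gaussSumG a b c = ∑ n ∈ range c, e c (a * (n : ℤ) ^ 2 + b * n) := by
    unfold gaussSumG e
    refine Finset.sum_congr rfl fun n _ => ?_
    congr 1
    push_cast
    ring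
  have hper : ∀ n : ℕ, e c (a * ((n + c : ℕ) : ℤ) ^ 2 + b * ((n + c : ℕ) : ℤ))
      = e c (a * (n : ℤ) ^ 2 + b * n) := by
    intro n
    have harg : a * ((n + c : ℕ) : ℤ) ^ 2 + b * ((n + c : ℕ) : ℤ)
        = (a * (n : ℤ) ^ 2 + b * n) + (c : ℤ) * (2 * a * n + a * c + b) := by
      push_cast; ring
    rw [harg, e_add, e_mul_c c hc, mul_one]
  have hshift : ∀ m : ℕ, (∑ n ∈ range c, e c (a * (n : ℤ) ^ 2 + b * n))
      = ∑ h ∈ range c, e c (a * ((h + m : ℕ) : ℤ) ^ 2 + b * ((h + m : ℕ) : ℤ)) :=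
    fun m => (shift_sum c (fun n => e c (a * (n : ℤ) ^ 2 + b * n)) hper m).symm
  have hconj : (starRingEnd ℂ) (gaussSumG a b c)
      = ∑ m ∈ range c, e c (-(a * (m : ℤ) ^ 2 + b * m)) := by
    rw [hG, map_sum]
    exact Finset.sum_congr rfl fun m _ => e_conj c _
  calc gaussSumG a b c * (starRingEnd ℂ) (gaussSumG a b c)
      = ∑ m ∈ range c, gaussSumG a b c * e c (-(a * (m : ℤ) ^ 2 + b * m)) := by
        rw [hconj, Finset.mul_sum]
    _ = ∑ m ∈ range c, ∑ h ∈ range c,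
          e c (a * ((h + m : ℕ) : ℤ) ^ 2 + b * ((h + m : ℕ) : ℤ))
            * e c (-(a * (m : ℤ) ^ 2 + b * m)) := by
        refine Finset.sum_congr rfl fun m _ => ?_
        rw [hG, hshift m, Finset.sum_mul]
    _ = ∑ h ∈ range c, ∑ m ∈ range c,
          e c (a * (h : ℤ) ^ 2 + b * h) * e c ((2 * a * h) * m) := by
        rw [Finset.sum_comm]
        refine Finset.sum_congr rfl fun h _ => Finset.sum_congr rfl fun m _ => ?_
        rw [← e_add, ← e_add]
        congr 1
        push_cast
        ring
    _ = ∑ h ∈ range c, e c (a * h ^ 2 + b * h) *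
          (if (c : ℤ) ∣ 2 * a * h then (c : ℂ) else 0) := by
        refine Finset.sum_congr rfl fun h _ => ?_
        rw [← Finset.mul_sum, sum_e_mul c hc]

lemma count_bound (a : ℤ) (c : ℕ) (hc : 0 < c) :
    ((range c).filter (fun h : ℕ => (c : ℤ) ∣ 2 * a * (h : ℤ))).card ≤ 2 * Int.gcd a c := by
  set d : ℕ := Int.gcd (2 * a) c with hd
  have hdcZ : (d : ℤ) ∣ (c : ℤ) := Int.gcd_dvd_right _ _
  have hdc : d ∣ c := Int.ofNat_dvd.mp hdcZ
  have hd0 : 0 < d := Int.gcd_pos_iff.mpr (Or.inr (by exact_mod_cast hc.ne'))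
  set c' : ℕ := c / d with hc'
  have hcc' : d * c' = c := Nat.mul_div_cancel' hdc
  have hc'0 : 0 < c' := Nat.div_pos (Nat.le_of_dvd hc hdc) hd0
  have hkey : ∀ h : ℕ, (c : ℤ) ∣ 2 * a * h → c' ∣ h := by
    intro h hdvd
    have hdA : (d : ℤ) ∣ 2 * a := Int.gcd_dvd_left _ _
    obtain ⟨a', ha'⟩ := hdA
    have hc'Z : (c' : ℤ) = (c : ℤ) / (d : ℤ) := by
      rw [hc']; exact_mod_cast Int.natCast_div c d
    have ha'Z : a' = (2 * a) / (d : ℤ) := by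
      rw [ha', Int.mul_ediv_cancel_left _ (by exact_mod_cast hd0.ne')]
    have hcop : Int.gcd a' c' = 1 := by
      rw [ha'Z, hc'Z]
      exact Int.gcd_div_gcd_div_gcd (by exact_mod_cast hd0)
    have hcZ : (c : ℤ) = (d : ℤ) * c' := by exact_mod_cast hcc'.symm
    rw [hcZ, ha'] at hdvd
    have h1 : (d : ℤ) * c' ∣ (d : ℤ) * (a' * h) := by
      convert hdvd using 1; ring
    have h2 : (c' : ℤ) ∣ a' * h :=
      (mul_dvd_mul_iff_left (a := (d : ℤ)) (by exact_mod_cast hd0.ne')).mp h1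
    have h3 : (c' : ℤ) ∣ (h : ℤ) := by
      have hcop' : Int.gcd (c' : ℤ) a' = 1 := by rw [Int.gcd_comm]; exact hcop
      exact Int.dvd_of_dvd_mul_right_of_gcd_one h2 hcop'
    exact_mod_cast h3
  calc ((range c).filter (fun h : ℕ => (c : ℤ) ∣ 2 * a * (h : ℤ))).card
      ≤ (range d).card := by
        apply Finset.card_le_card_of_injOn (fun h => h / c')
        · intro h hh
          simp only [Finset.mem_coe, Finset.mem_filter, Finset.mem_range] at hh
          simp only [Finset.mem_coe, Finset.mem_range]
          exact (Nat.div_lt_iff_lt_mul hc'0).mpr (by rw [← hcc'] at hh; exact hh.1)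
        · intro h₁ hh₁ h₂ hh₂ heq
          simp only [Finset.mem_coe, Finset.mem_filter, Finset.mem_range] at hh₁ hh₂
          have e₁ := Nat.mul_div_cancel' (hkey h₁ hh₁.2)
          have e₂ := Nat.mul_div_cancel' (hkey h₂ hh₂.2)
          simp only [] at heq
          rw [← e₁, ← e₂, heq]
    _ = d := Finset.card_range d
    _ ≤ 2 * Int.gcd a c := by
        have h2a : (d : ℤ) ∣ 2 * a := Int.gcd_dvd_left _ _
        have h2c : (d : ℤ) ∣ 2 * (c : ℤ) := Dvd.dvd.mul_left hdcZ 2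
        have hdg : (d : ℤ) ∣ (Int.gcd (2 * a) (2 * (c : ℤ)) : ℤ) := Int.dvd_coe_gcd h2a h2c
        have hgg : Int.gcd (2 * a) (2 * (c : ℤ)) = 2 * Int.gcd a c := by
          rw [Int.gcd_mul_left]; norm_num
        rw [hgg] at hdg
        have : d ∣ 2 * Int.gcd a c := Int.ofNat_dvd.mp hdg
        have hgpos : 0 < Int.gcd a (c : ℤ) :=
          Int.gcd_pos_iff.mpr (Or.inr (by exact_mod_cast hc.ne'))
        exact Nat.le_of_dvd (by omega) this

end GaussAux

/-- There exists an absolute constant `C` such that for all integers `a, b` and every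
positive integer `c`, `|G(a,b,c)| ≤ C · gcd(a,c)^{1/2} · c^{1/2}`. -/
theorem gauss_sum_bound :
    ∃ C : ℝ, ∀ (a b : ℤ) (c : ℕ), 0 < c →
      ‖gaussSumG a b c‖ ≤ C * Real.sqrt (Int.gcd a c) * Real.sqrt c := by
  refine ⟨Real.sqrt 2, fun a b c hc => ?_⟩
  have key := GaussAux.mul_conj_eq a b c hc
  set G := gaussSumG a b c with hGdef
  have habs2 : ‖G‖ ^ 2 = ‖G * (starRingEnd ℂ) G‖ := by
    rw [norm_mul, Complex.norm_conj, sq]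
  have hgnn : (0 : ℝ) ≤ (Int.gcd a c : ℝ) := Nat.cast_nonneg _
  have hbound : ‖G * (starRingEnd ℂ) G‖ ≤ 2 * (Int.gcd a c : ℝ) * c := by
    rw [key]
    calc ‖∑ h ∈ Finset.range c, GaussAux.e c (a * h ^ 2 + b * h) *
            (if (c : ℤ) ∣ 2 * a * h then (c : ℂ) else 0)‖
        ≤ ∑ h ∈ Finset.range c, ‖GaussAux.e c (a * h ^ 2 + b * h) *
            (if (c : ℤ) ∣ 2 * a * h then (c : ℂ) else 0)‖ :=
          norm_sum_le _ _
      _ = ∑ h ∈ Finset.range c, (if (c : ℤ) ∣ 2 * a * (h : ℤ) then (c : ℝ) else 0) := by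
          refine Finset.sum_congr rfl fun h _ => ?_
          rw [norm_mul, GaussAux.e_abs, one_mul]
          split_ifs <;> simp
      _ = ((Finset.range c).filter (fun h : ℕ => (c : ℤ) ∣ 2 * a * (h : ℤ))).card * (c : ℝ) := by
          rw [← Finset.sum_filter, Finset.sum_const, nsmul_eq_mul]
      _ ≤ (2 * Int.gcd a c : ℕ) * (c : ℝ) := by
          exact mul_le_mul_of_nonneg_right
            (by exact_mod_cast GaussAux.count_bound a c hc) (Nat.cast_nonneg c)
      _ = 2 * (Int.gcd a c : ℝ) * c := by push_cast; ring
  have habs_le : ‖G‖ ^ 2 ≤ 2 * (Int.gcd a c : ℝ) * c := habs2 ▸ hbound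
  have h1 : ‖G‖ = Real.sqrt (‖G‖ ^ 2) :=
    (Real.sqrt_sq (norm_nonneg G)).symm
  rw [h1]
  calc Real.sqrt (‖G‖ ^ 2) ≤ Real.sqrt (2 * (Int.gcd a c : ℝ) * c) :=
        Real.sqrt_le_sqrt habs_le
    _ = Real.sqrt 2 * Real.sqrt (Int.gcd a c) * Real.sqrt c := by
        rw [Real.sqrt_mul (by positivity : (0:ℝ) ≤ 2 * (Int.gcd a c : ℝ))]
        rw [Real.sqrt_mul (by norm_num : (0:ℝ) ≤ 2)]
end

section
/- Let a, b be integers and c a positive integer, and set d = gcd(a,c). If d does not divide b, then G(a,b,c) = 0. -/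
lemma exp_two_pi_add_int (z : ℂ) (k : ℤ) :
    Complex.exp (2 * Real.pi * Complex.I * (z + k)) =
      Complex.exp (2 * Real.pi * Complex.I * z) := by
  rw [mul_add, Complex.exp_add]
  have : (2 : ℂ) * Real.pi * Complex.I * k = k * (2 * Real.pi * Complex.I) := by ring
  rw [this, Complex.exp_int_mul_two_pi_mul_I, mul_one]

/-- If `d = gcd(a,c)` does not divide `b`, then `G(a,b,c) = 0`. -/
theorem gauss_sum_eq_zero_of_not_dvd (a b : ℤ) (c : ℕ) (hc : 0 < c)
    (h : ¬ ((Int.gcd a c : ℤ) ∣ b)) : gaussSumG a b c = 0 := by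
  haveI : NeZero c := ⟨hc.ne'⟩
  set d : ℕ := Int.gcd a c with hd
  have hdc : (d : ℤ) ∣ (c : ℤ) := Int.gcd_dvd_right a c
  have hda : (d : ℤ) ∣ a := Int.gcd_dvd_left a c
  have hdpos : 0 < d := Nat.pos_of_ne_zero (by
    intro h0
    rw [hd, Int.gcd_eq_zero_iff] at h0
    have := h0.2
    simp at this
    omega)
  have hd1 : 1 < d := by
    rcases Nat.lt_or_ge 1 d with h2 | h2
    · exact h2
    · have hd1' : d = 1 := by omega
      exact absurd (by simp [hd1'] : (d : ℤ) ∣ b) h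
  have hdc' : d ∣ c := by exact_mod_cast hdc
  set m : ℕ := c / d with hm
  have hmc : m * d = c := Nat.div_mul_cancel hdc'
  have hm0 : 0 < m := Nat.div_pos (Nat.le_of_dvd hc hdc') hdpos
  have hmltc : m < c := by
    calc m = m * 1 := (mul_one m).symm
    _ < m * d := (Nat.mul_lt_mul_left hm0).mpr hd1
    _ = c := hmc
  obtain ⟨a', ha'⟩ := hda
  have hcC : (c : ℂ) ≠ 0 := Nat.cast_ne_zero.mpr hc.ne'
  have hdC : (d : ℂ) ≠ 0 := Nat.cast_ne_zero.mpr hdpos.ne'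
  set f : ℕ → ℂ := fun n =>
    Complex.exp (2 * Real.pi * Complex.I * (((a : ℂ) * n ^ 2 + (b : ℂ) * n) / (c : ℂ))) with hf
  set ζ : ℂ := Complex.exp (2 * Real.pi * Complex.I * ((b : ℂ) / (d : ℂ))) with hζ
  -- key identities in ℂ
  have hamc : (a : ℂ) * m / c = (a' : ℂ) := by
    have : (a : ℂ) * m = (a' : ℂ) * c := by
      have : ((a * m : ℤ) : ℂ) = ((a' * c : ℤ) : ℂ) := by
        congr 1
        rw [ha', ← hmc]
        push_cast
        ring
      push_cast at this
      exact this
    rw [this, mul_div_assoc, div_self hcC, mul_one]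
  have hmC : (m : ℂ) ≠ 0 := Nat.cast_ne_zero.mpr hm0.ne'
  have hbmc : (b : ℂ) * m / c = (b : ℂ) / d := by
    rw [← hmc]
    push_cast
    field_simp
  -- periodicity
  have hper : Function.Periodic f c := by
    intro n
    simp only [hf]
    have key : ((a : ℂ) * (n + c) ^ 2 + (b : ℂ) * (n + c)) / c =
        ((a : ℂ) * n ^ 2 + (b : ℂ) * n) / c + ((a * (2 * n + c) + b : ℤ) : ℂ) := by
      push_cast
      field_simp
      ring
    push_cast
    rw [key, exp_two_pi_add_int]
  -- shift identity
  have hstep : ∀ n : ℕ, f (n + m) = ζ * f n := by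
    intro n
    simp only [hf, hζ]
    have key : ((a : ℂ) * (n + m) ^ 2 + (b : ℂ) * (n + m)) / c =
        ((b : ℂ) / d + ((a : ℂ) * n ^ 2 + (b : ℂ) * n) / c) + ((a' * (2 * n + m) : ℤ) : ℂ) := by
      have expand : ((a : ℂ) * (n + m) ^ 2 + (b : ℂ) * (n + m)) / c =
          ((a : ℂ) * n ^ 2 + (b : ℂ) * n) / c + ((a : ℂ) * m / c) * (2 * n + m)
            + (b : ℂ) * m / c := by
        field_simp
        ring
      rw [expand, hamc, hbmc]
      push_cast
      ring
    push_cast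
    rw [key, exp_two_pi_add_int, mul_add, Complex.exp_add]
  -- ζ ≠ 1
  have hζne : ζ ≠ 1 := by
    intro h1
    rw [hζ, Complex.exp_eq_one_iff] at h1
    obtain ⟨k, hk⟩ := h1
    apply h
    have h2πI : (2 * (Real.pi : ℂ) * Complex.I) ≠ 0 := by
      simp [Real.pi_ne_zero, Complex.I_ne_zero]
    have : (b : ℂ) / d = k := by
      have hk' : 2 * (Real.pi : ℂ) * Complex.I * ((b : ℂ) / d) =
          2 * (Real.pi : ℂ) * Complex.I * k := by rw [hk]; ring
      exact mul_left_cancel₀ h2πI hk'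
    have hb : (b : ℂ) = (k * d : ℤ) := by
      push_cast
      rw [← this]
      field_simp
    have : b = k * d := by exact_mod_cast hb
    exact ⟨k, by rw [this]; ring⟩
  -- sum over ZMod c
  have hsum : gaussSumG a b c = ∑ x : ZMod c, f x.val := by
    rw [gaussSumG]
    refine Finset.sum_nbij' (fun n => (n : ZMod c)) (fun x => x.val) ?_ ?_ ?_ ?_ ?_
    · intro n _; exact Finset.mem_univ _
    · intro x _; exact Finset.mem_range.mpr (ZMod.val_lt x)
    · intro n hn; exact ZMod.val_natCast_of_lt (Finset.mem_range.mp hn)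
    · intro x _; exact ZMod.natCast_rightInverse x
    · intro n hn
      rw [ZMod.val_natCast_of_lt (Finset.mem_range.mp hn)]
  have hshift : (∑ x : ZMod c, f x.val) = ζ * ∑ x : ZMod c, f x.val := by
    calc (∑ x : ZMod c, f x.val) = ∑ x : ZMod c, f (x + (m : ZMod c)).val :=
          (Fintype.sum_equiv (Equiv.addRight (m : ZMod c)) _ _ (fun x => rfl)).symm
    _ = ∑ x : ZMod c, ζ * f x.val := by
        refine Finset.sum_congr rfl fun x _ => ?_
        rw [ZMod.val_add, ZMod.val_natCast_of_lt hmltc, hper.map_mod_nat, hstep]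
    _ = ζ * ∑ x : ZMod c, f x.val := (Finset.mul_sum _ _ _).symm
  have : (ζ - 1) * (∑ x : ZMod c, f x.val) = 0 := by
    rw [sub_mul, one_mul, ← hshift, sub_self]
  rcases mul_eq_zero.mp this with h0 | h0
  · exact absurd (by linear_combination h0 : ζ = 1) hζne
  · rw [hsum, h0]
end

section
/- Let a, b be integers and c a positive integer, and set d = gcd(a,c). If d divides b, then G(a,b,c) = d · G(a/d, b/d, c/d). -/
lemma sum_range_mul_blocks (f : ℕ → ℂ) (m n : ℕ) :
    ∑ k ∈ Finset.range (m * n), f k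
      = ∑ q ∈ Finset.range m, ∑ r ∈ Finset.range n, f (q * n + r) := by
  induction m with
  | zero => simp
  | succ m ih =>
    rw [Nat.succ_mul, Finset.sum_range_add, ih, Finset.sum_range_succ]

/-- If `d = gcd(a,c)` divides `b`, then `G(a,b,c) = d · G(a/d, b/d, c/d)`. -/
theorem gauss_sum_reduction (a b : ℤ) (c : ℕ) (hc : 0 < c)
    (h : ((Int.gcd a c : ℤ) ∣ b)) :
    gaussSumG a b c =
      (Int.gcd a c : ℂ) *
        gaussSumG (a / (Int.gcd a c : ℤ)) (b / (Int.gcd a c : ℤ)) (c / Int.gcd a c) := by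
  set d : ℕ := Int.gcd a c with hd
  have hd0 : 0 < d := Int.gcd_pos_of_ne_zero_right a (by exact_mod_cast hc.ne')
  have hdc : d ∣ c := Int.natCast_dvd_natCast.mp (Int.gcd_dvd_right a c)
  obtain ⟨c', hc'⟩ := hdc
  have hcd : c / d = c' := by rw [hc', Nat.mul_div_cancel_left _ hd0]
  have hc'0 : 0 < c' := by
    rcases Nat.eq_zero_or_pos c' with h0 | h0
    · exfalso; rw [h0, mul_zero] at hc'; exact hc.ne' hc'
    · exact h0
  have ha : (d : ℤ) ∣ a := Int.gcd_dvd_left a c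
  set a' : ℤ := a / d with ha'
  set b' : ℤ := b / d with hb'
  have haa : a = d * a' := (Int.mul_ediv_cancel' ha).symm
  have hbb : b = d * b' := (Int.mul_ediv_cancel' h).symm
  have hdC : (d : ℂ) ≠ 0 := Nat.cast_ne_zero.mpr hd0.ne'
  have hcC : (c' : ℂ) ≠ 0 := Nat.cast_ne_zero.mpr hc'0.ne'
  rw [hcd]
  unfold gaussSumG
  rw [hc', sum_range_mul_blocks]
  have key : ∀ q ∈ Finset.range d, ∀ r ∈ Finset.range c',
      Complex.exp (2 * Real.pi * Complex.I *
        (((a : ℂ) * (q * c' + r : ℕ) ^ 2 + (b : ℂ) * (q * c' + r : ℕ)) / ((d * c' : ℕ) : ℂ)))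
      = Complex.exp (2 * Real.pi * Complex.I *
          (((a' : ℂ) * r ^ 2 + (b' : ℂ) * r) / (c' : ℂ))) := by
    intro q _ r _
    have key2 : ((a : ℂ) * (q * c' + r : ℕ) ^ 2 + (b : ℂ) * (q * c' + r : ℕ)) / ((d * c' : ℕ) : ℂ)
        = ((a' * q ^ 2 * c' + 2 * a' * q * r + b' * q : ℤ) : ℂ)
          + ((a' : ℂ) * r ^ 2 + (b' : ℂ) * r) / (c' : ℂ) := by
      rw [haa, hbb]
      push_cast
      field_simp
      ring
    rw [key2, mul_add, Complex.exp_add]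
    have : 2 * (Real.pi : ℂ) * Complex.I *
        ((a' * q ^ 2 * c' + 2 * a' * q * r + b' * q : ℤ) : ℂ)
        = ((a' * q ^ 2 * c' + 2 * a' * q * r + b' * q : ℤ) : ℂ) * (2 * Real.pi * Complex.I) := by
      ring
    rw [this, Complex.exp_int_mul_two_pi_mul_I, one_mul]
  rw [Finset.sum_congr rfl (fun q hq => Finset.sum_congr rfl (fun r hr => key q hq r hr))]
  rw [Finset.sum_const, Finset.card_range, nsmul_eq_mul]
end

section
/- For every ε > 0 there exists a constant C(ε) such that for all positive integers N, s and every real number τ > 0, ∑_{c ≥ 1, Nc ≤ τ/s} gcd(s, Nc)^{1/2} (Nc)^{1/2} ≤ C(ε) · N^{−1/2+ε} · (τ/s)^{3/2} · s^{ε}, where the sum ranges over all positive integers c with Nc ≤ τ/s and gcd denotes the greatest common divisor. -/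
open Finset

lemma aux_exp (ε : ℝ) (hε : 0 < ε) (a : ℕ) :
    (a + 1 : ℝ) ≤ (1 + 1 / (ε * Real.log 2)) * (2:ℝ) ^ ((a:ℝ) * ε) := by
  have hL : 0 < Real.log 2 := Real.log_pos (by norm_num)
  have hεl : 0 < ε * Real.log 2 := by positivity
  have h1 : (1:ℝ) ≤ (2:ℝ) ^ ((a:ℝ)*ε) := Real.one_le_rpow one_le_two (by positivity)
  have h2 : (a:ℝ) * ε * Real.log 2 ≤ (2:ℝ) ^ ((a:ℝ)*ε) := by
    rw [Real.rpow_def_of_pos (by norm_num)]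
    have := Real.add_one_le_exp (Real.log 2 * ((a:ℝ)*ε))
    nlinarith
  have h3 : (a:ℝ) ≤ (2:ℝ) ^ ((a:ℝ)*ε) / (ε * Real.log 2) := by
    rw [le_div_iff₀ hεl]; nlinarith
  have h4 : (1 + 1 / (ε * Real.log 2)) * (2:ℝ) ^ ((a:ℝ)*ε)
      = (2:ℝ) ^ ((a:ℝ)*ε) + (2:ℝ) ^ ((a:ℝ)*ε) / (ε * Real.log 2) := by ring
  linarith

lemma tau_le_rpow (ε : ℝ) (hε : 0 < ε) :
    ∃ C : ℝ, 1 ≤ C ∧ ∀ s : ℕ, s ≠ 0 → (s.divisors.card : ℝ) ≤ C * (s:ℝ) ^ ε := by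
  have hL : 0 < Real.log 2 := Real.log_pos (by norm_num)
  set B : ℝ := 1 + 1 / (ε * Real.log 2) with hBdef
  have hB1 : (1:ℝ) ≤ B := le_add_of_nonneg_right (by positivity)
  set T : ℝ := (2:ℝ) ^ (1/ε) with hTdef
  set P : ℕ := ⌊T⌋₊ + 1 with hPdef
  refine ⟨B ^ P, one_le_pow₀ hB1, fun s hs => ?_⟩
  rw [Nat.card_divisors hs]
  have hsε : (s:ℝ) ^ ε = ∏ p ∈ s.primeFactors, ((p:ℝ) ^ (s.factorization p)) ^ ε := by
    conv_lhs => rw [← Nat.factorization_prod_pow_eq_self hs]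
    push_cast
    exact (Real.finset_prod_rpow _ _ (fun i _ => by positivity) ε).symm
  rw [hsε]
  push_cast
  -- factorwise bound
  have key : ∀ p ∈ s.primeFactors, ((s.factorization p : ℝ) + 1)
      ≤ (if (p:ℝ) < T then B else 1) * ((p:ℝ) ^ (s.factorization p)) ^ ε := by
    intro p hp
    have hprime := Nat.prime_of_mem_primeFactors hp
    have hp2 : (2:ℝ) ≤ (p:ℝ) := by exact_mod_cast hprime.two_le
    set a := s.factorization p with ha
    have hpow : ((p:ℝ) ^ a) ^ ε = (p:ℝ) ^ ((a:ℝ) * ε) := by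
      rw [← Real.rpow_natCast (p:ℝ) a, ← Real.rpow_mul (by linarith)]
    by_cases hcase : (p:ℝ) < T
    · rw [if_pos hcase, hpow]
      refine (aux_exp ε hε a).trans (mul_le_mul_of_nonneg_left ?_ ?_)
      · exact Real.rpow_le_rpow (by norm_num) hp2 (by positivity)
      · have : 0 ≤ 1 / (ε * Real.log 2) := by positivity
        linarith
    · rw [if_neg hcase, one_mul, hpow]
      have h1 : T ^ ((a:ℝ) * ε) ≤ (p:ℝ) ^ ((a:ℝ)*ε) :=
        Real.rpow_le_rpow (by positivity) (not_lt.mp hcase) (by positivity)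
      have h2 : T ^ ((a:ℝ) * ε) = (2:ℝ) ^ (a:ℝ) := by
        rw [hTdef, ← Real.rpow_mul (by norm_num)]
        congr 1; field_simp
      have h3 : (a:ℝ) + 1 ≤ (2:ℝ) ^ (a:ℝ) := by
        rw [Real.rpow_natCast]
        exact_mod_cast Nat.lt_two_pow_self (n := a)
      linarith
  calc ∏ p ∈ s.primeFactors, ((s.factorization p : ℝ) + 1)
      ≤ ∏ p ∈ s.primeFactors, ((if (p:ℝ) < T then B else 1) * ((p:ℝ) ^ (s.factorization p)) ^ ε) :=
        Finset.prod_le_prod (fun p _ => by positivity) key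
    _ = (∏ p ∈ s.primeFactors, (if (p:ℝ) < T then B else 1))
        * ∏ p ∈ s.primeFactors, ((p:ℝ) ^ (s.factorization p)) ^ ε := Finset.prod_mul_distrib
    _ ≤ B ^ P * ∏ p ∈ s.primeFactors, ((p:ℝ) ^ (s.factorization p)) ^ ε := by
        refine mul_le_mul_of_nonneg_right ?_ (Finset.prod_nonneg fun p _ => by positivity)
        rw [Finset.prod_ite, Finset.prod_const, Finset.prod_const, one_pow, mul_one]
        refine pow_le_pow_right₀ hB1 ?_
        calc (Finset.filter (fun p : ℕ => (p:ℝ) < T) s.primeFactors).card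
            ≤ (Finset.range P).card := Finset.card_le_card ?_
          _ = P := Finset.card_range P
        intro p hp
        rw [Finset.mem_range, hPdef, Nat.lt_succ_iff]
        exact Nat.le_floor (le_of_lt (Finset.mem_filter.mp hp).2)



/-- For every `ε > 0` there is a constant `C(ε)` such that for all positive integers `N, s`
and every real `τ > 0`,
`∑_{c ≥ 1, Nc ≤ τ/s} gcd(s, Nc)^{1/2} (Nc)^{1/2} ≤ C(ε) · N^{-1/2+ε} · (τ/s)^{3/2} · s^ε`. -/
theorem sum_gcd_sqrt_le (ε : ℝ) (hε : 0 < ε) :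
    ∃ C : ℝ, ∀ (N s : ℕ), 0 < N → 0 < s → ∀ τ : ℝ, 0 < τ →
      ∑ c ∈ (Finset.Icc 1 ⌊τ⌋₊).filter (fun c : ℕ => ((N * c : ℕ) : ℝ) ≤ τ / s),
          Real.sqrt (Nat.gcd s (N * c)) * Real.sqrt ((N * c : ℕ))
        ≤ C * (N : ℝ) ^ (-(1 : ℝ) / 2 + ε) * (τ / s) ^ ((3 : ℝ) / 2) * (s : ℝ) ^ ε := by
  obtain ⟨C₀, hC₀1, hC₀⟩ := tau_le_rpow ε hε
  refine ⟨C₀, fun N s hN hs τ hτ => ?_⟩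
  have hsR : (0:ℝ) < s := by exact_mod_cast hs
  have hNR : (0:ℝ) < N := by exact_mod_cast hN
  set X : ℝ := τ / s with hXdef
  have hX : 0 < X := div_pos hτ hsR
  set S := (Finset.Icc 1 ⌊τ⌋₊).filter (fun c : ℕ => ((N * c : ℕ) : ℝ) ≤ τ / s) with hSdef
  set K : ℕ := ⌊X / N⌋₊ with hKdef
  -- step 1: sqrt (Nc) ≤ sqrt X
  have step1 : ∑ c ∈ S, Real.sqrt (Nat.gcd s (N*c)) * Real.sqrt ((N*c:ℕ))
      ≤ ∑ c ∈ S, Real.sqrt (Nat.gcd s (N*c)) * Real.sqrt X := by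
    refine Finset.sum_le_sum fun c hc => ?_
    have hcX : ((N*c:ℕ):ℝ) ≤ X := (Finset.mem_filter.mp hc).2
    exact mul_le_mul_of_nonneg_left (Real.sqrt_le_sqrt hcX) (Real.sqrt_nonneg _)
  -- step 2: termwise gcd ≤ divisor sum
  have step2 : ∀ c ∈ S, Real.sqrt (Nat.gcd s (N*c))
      ≤ ∑ d ∈ s.divisors.filter (· ∣ N*c), Real.sqrt d := by
    intro c hc
    refine Finset.single_le_sum (f := fun d : ℕ => Real.sqrt d)
      (fun d _ => Real.sqrt_nonneg _) ?_
    rw [Finset.mem_filter, Nat.mem_divisors]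
    exact ⟨⟨Nat.gcd_dvd_left _ _, hs.ne'⟩, Nat.gcd_dvd_right _ _⟩
  -- step 3: swap sums
  have step3 : ∑ c ∈ S, Real.sqrt (Nat.gcd s (N*c))
      ≤ ∑ d ∈ s.divisors, ((S.filter (fun c => d ∣ N*c)).card : ℝ) * Real.sqrt d := by
    calc ∑ c ∈ S, Real.sqrt (Nat.gcd s (N*c))
        ≤ ∑ c ∈ S, ∑ d ∈ s.divisors.filter (· ∣ N*c), Real.sqrt d := Finset.sum_le_sum step2
      _ = ∑ c ∈ S, ∑ d ∈ s.divisors, if d ∣ N*c then Real.sqrt d else 0 :=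
          Finset.sum_congr rfl fun c _ => (Finset.sum_filter _ _)
      _ = ∑ d ∈ s.divisors, ∑ c ∈ S, if d ∣ N*c then Real.sqrt d else 0 := Finset.sum_comm
      _ = ∑ d ∈ s.divisors, ((S.filter (fun c => d ∣ N*c)).card : ℝ) * Real.sqrt d := by
          refine Finset.sum_congr rfl fun d _ => ?_
          rw [← Finset.sum_filter, Finset.sum_const, nsmul_eq_mul]
  -- step 4: per-divisor count bound
  have step4 : ∀ d ∈ s.divisors, ((S.filter (fun c => d ∣ N*c)).card : ℝ) * Real.sqrt d
      ≤ (X / N) * Real.sqrt N := by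
    intro d hd
    have hdpos : 0 < d := Nat.pos_of_mem_divisors hd
    set g : ℕ := Nat.gcd d N with hgdef
    have hg : 0 < g := Nat.gcd_pos_of_pos_left _ hdpos
    set d' : ℕ := d / g with hd'def
    have hd' : 0 < d' := Nat.div_pos (Nat.le_of_dvd hdpos (Nat.gcd_dvd_left d N)) hg
    -- subset of multiples of d'
    have hsub : S.filter (fun c => d ∣ N*c) ⊆ (Finset.Icc 1 K).filter (fun c => d' ∣ c) := by
      intro c hc
      rw [Finset.mem_filter] at hc
      obtain ⟨hcS, hdvd⟩ := hc
      rw [hSdef, Finset.mem_filter, Finset.mem_Icc] at hcS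
      obtain ⟨⟨hc1, _⟩, hcX⟩ := hcS
      rw [Finset.mem_filter, Finset.mem_Icc]
      refine ⟨⟨hc1, ?_⟩, ?_⟩
      · -- c ≤ K
        refine Nat.le_floor ?_
        rw [le_div_iff₀ hNR]
        have : (N:ℝ) * c ≤ X := by push_cast at hcX ⊢; linarith [hcX]
        linarith [this]
      · -- d' ∣ c
        have h1 : d' ∣ (N / g) * c := by
          have hNg : g ∣ N := Nat.gcd_dvd_right d N
          have hdg : g ∣ d := Nat.gcd_dvd_left d N
          have : g * d' ∣ g * ((N / g) * c) := by
            rw [Nat.mul_div_cancel' hdg, ← mul_assoc, Nat.mul_div_cancel' hNg]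
            exact hdvd
          exact (mul_dvd_mul_iff_left hg.ne').mp this
        exact (Nat.coprime_div_gcd_div_gcd hg).dvd_of_dvd_mul_left h1
    -- card of multiples of d' in Icc 1 K
    have hcard : ((Finset.Icc 1 K).filter (fun c => d' ∣ c)).card ≤ K / d' := by
      have : ((Finset.Icc 1 K).filter (fun c => d' ∣ c)).card
          ≤ (Finset.Icc 1 (K / d')).card := by
        refine Finset.card_le_card_of_injOn (fun c => c / d') ?_ ?_
        · intro c hc
          rw [Finset.mem_coe, Finset.mem_filter, Finset.mem_Icc] at hc
          obtain ⟨⟨hc1, hcK⟩, hdc⟩ := hc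
          rw [Finset.mem_coe, Finset.mem_Icc]
          exact ⟨(Nat.one_le_div_iff hd').mpr (Nat.le_of_dvd hc1 hdc),
            Nat.div_le_div_right hcK⟩
        · intro c1 h1 c2 h2 heq
          rw [Finset.mem_coe, Finset.mem_filter] at h1 h2
          have e1 := Nat.div_mul_cancel h1.2
          have e2 := Nat.div_mul_cancel h2.2
          rw [← e1, ← e2]
          simp only at heq
          rw [heq]
      simpa using this
    have hcardR : ((S.filter (fun c => d ∣ N*c)).card : ℝ) ≤ (X / N) / d' := by
      have h1 : ((S.filter (fun c => d ∣ N*c)).card : ℝ) ≤ ((K / d' : ℕ) : ℝ) := by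
        exact_mod_cast (Finset.card_le_card hsub).trans hcard
      refine h1.trans ((Nat.cast_div_le).trans ?_)
      have hKle : (K:ℝ) ≤ X / N := Nat.floor_le (by positivity)
      gcongr
    -- sqrt d ≤ d' * sqrt N
    have key2 : Real.sqrt d ≤ (d':ℝ) * Real.sqrt N := by
      have hd'cast : (d':ℝ) = (d:ℝ) / (g:ℝ) := by
        rw [hd'def]; exact_mod_cast Nat.cast_div (Nat.gcd_dvd_left d N) (by exact_mod_cast hg.ne')
      have hgN : (g:ℝ) * g ≤ (N:ℝ) * d := by
        have h1 : g ≤ N := Nat.le_of_dvd hN (Nat.gcd_dvd_right d N)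
        have h2 : g ≤ d := Nat.le_of_dvd hdpos (Nat.gcd_dvd_left d N)
        exact_mod_cast Nat.mul_le_mul h1 h2
      have hgle : (g:ℝ) ≤ Real.sqrt N * Real.sqrt d := by
        rw [← Real.sqrt_mul (by positivity)]
        calc (g:ℝ) = Real.sqrt ((g:ℝ) * g) := (Real.sqrt_mul_self (by positivity)).symm
          _ ≤ Real.sqrt ((N:ℝ) * d) := Real.sqrt_le_sqrt hgN
      have hds : Real.sqrt d * Real.sqrt d = (d:ℝ) := Real.mul_self_sqrt (by positivity)
      rw [hd'cast, div_mul_eq_mul_div, le_div_iff₀ (by exact_mod_cast hg)]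
      nlinarith [Real.sqrt_nonneg (d:ℝ), Real.sqrt_nonneg (N:ℝ)]
    have hXN : (0:ℝ) ≤ X / N := div_nonneg hX.le hNR.le
    calc ((S.filter (fun c => d ∣ N*c)).card : ℝ) * Real.sqrt d
        ≤ ((X/N)/d') * Real.sqrt d :=
          mul_le_mul_of_nonneg_right hcardR (Real.sqrt_nonneg _)
      _ ≤ ((X/N)/d') * ((d':ℝ) * Real.sqrt N) :=
          mul_le_mul_of_nonneg_left key2 (div_nonneg (div_nonneg hX.le hNR.le) (Nat.cast_nonneg d'))
      _ = (X / N) * Real.sqrt N := by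
          field_simp
  have e1 : X * Real.sqrt X = X ^ ((3:ℝ)/2) := by
    rw [Real.sqrt_eq_rpow, show (3:ℝ)/2 = 1 + 1/2 by norm_num, Real.rpow_add hX, Real.rpow_one]
  have e2 : Real.sqrt N / N = (N:ℝ) ^ (-(1:ℝ)/2) := by
    rw [Real.sqrt_eq_rpow, show -(1:ℝ)/2 = 1/2 - 1 by norm_num, Real.rpow_sub hNR, Real.rpow_one]
  have e3 : (N:ℝ)^(-(1:ℝ)/2) ≤ (N:ℝ)^(-(1:ℝ)/2 + ε) :=
    Real.rpow_le_rpow_of_exponent_le (by exact_mod_cast hN) (by linarith)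
  calc ∑ c ∈ S, Real.sqrt (Nat.gcd s (N*c)) * Real.sqrt ((N*c:ℕ))
      ≤ ∑ c ∈ S, Real.sqrt (Nat.gcd s (N*c)) * Real.sqrt X := step1
    _ = (∑ c ∈ S, Real.sqrt (Nat.gcd s (N*c))) * Real.sqrt X := by rw [← Finset.sum_mul]
    _ ≤ (∑ d ∈ s.divisors, (X / N) * Real.sqrt N) * Real.sqrt X :=
        mul_le_mul_of_nonneg_right (step3.trans (Finset.sum_le_sum step4)) (Real.sqrt_nonneg _)
    _ = (s.divisors.card : ℝ) * ((X/N) * Real.sqrt N) * Real.sqrt X := by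
        rw [Finset.sum_const, nsmul_eq_mul]
    _ ≤ (C₀ * (s:ℝ)^ε) * ((X/N) * Real.sqrt N) * Real.sqrt X := by
        have hXN : (0:ℝ) ≤ X / N := div_nonneg hX.le hNR.le
        exact mul_le_mul_of_nonneg_right (mul_le_mul_of_nonneg_right (hC₀ s hs.ne')
          (mul_nonneg hXN (Real.sqrt_nonneg _))) (Real.sqrt_nonneg _)
    _ = C₀ * (Real.sqrt N / N) * (X * Real.sqrt X) * (s:ℝ)^ε := by ring
    _ = C₀ * (N:ℝ)^(-(1:ℝ)/2) * (X ^ ((3:ℝ)/2)) * (s:ℝ)^ε := by rw [e1, e2]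
    _ ≤ C₀ * (N:ℝ)^(-(1:ℝ)/2 + ε) * (X ^ ((3:ℝ)/2)) * (s:ℝ)^ε := by
        exact mul_le_mul_of_nonneg_right (mul_le_mul_of_nonneg_right
          (mul_le_mul_of_nonneg_left e3 (by linarith)) (Real.rpow_nonneg hX.le _))
          (Real.rpow_nonneg (Nat.cast_nonneg s) _)
end

section
/- For every ε > 0 and every integer k ≥ 3 there exists a constant C(ε,k) such that for all positive integers N, s and every real number τ > 0, ∑_{c ≥ 1, Nc > τ/s} gcd(s, Nc)^{1/2} (Nc)^{3/2−k} ≤ C(ε,k) · N^{−1/2+ε} · (τ/s)^{5/2−k} · s^{ε}, where the sum ranges over all positive integers c with Nc > τ/s (this series converges since 3/2 − k ≤ −3/2). -/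
open Real

lemma step_lemma (a : ℝ) (ha : 1 ≤ a) :
    (a + 1) ^ (-(3:ℝ)/2) ≤ 2 * (a ^ (-(1:ℝ)/2) - (a+1) ^ (-(1:ℝ)/2)) := by
  have ha0 : (0:ℝ) < a := by linarith
  have ha1 : (0:ℝ) < a + 1 := by linarith
  set x := Real.sqrt a with hx
  set y := Real.sqrt (a+1) with hy
  have hx0 : 0 < x := Real.sqrt_pos.mpr ha0
  have hy0 : 0 < y := Real.sqrt_pos.mpr ha1
  have hxa : x ^ 2 = a := Real.sq_sqrt ha0.le
  have hya : y ^ 2 = a + 1 := Real.sq_sqrt ha1.le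
  have hxy : x ≤ y := Real.sqrt_le_sqrt (by linarith)
  have e1 : a ^ (-(1:ℝ)/2) = x⁻¹ := by
    rw [hx, Real.sqrt_eq_rpow, ← Real.rpow_neg ha0.le]; norm_num
  have e2 : (a+1) ^ (-(1:ℝ)/2) = y⁻¹ := by
    rw [hy, Real.sqrt_eq_rpow, ← Real.rpow_neg ha1.le]; norm_num
  have e3 : (a+1) ^ (-(3:ℝ)/2) = (y^3)⁻¹ := by
    rw [hy, Real.sqrt_eq_rpow, ← Real.rpow_natCast ((a+1) ^ (1/(2:ℝ))) 3,
      ← Real.rpow_mul ha1.le, ← Real.rpow_neg ha1.le]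
    norm_num
  rw [e1, e2, e3]
  have h2 : 2 * (x⁻¹ - y⁻¹) = (2*(y-x))/(x*y) := by field_simp
  have h3 : (y^3)⁻¹ = 1/(y^3) := by ring
  rw [h2, h3, div_le_div_iff₀ (by positivity) (by positivity)]
  have h4 : (y-x)*(y+x) = 1 := by nlinarith
  nlinarith [mul_pos hx0 hy0, mul_pos (mul_pos hx0 hy0) hy0,
    mul_le_mul_of_nonneg_right hxy (sq_nonneg y), sq_nonneg (y-x), pow_pos hy0 3]

lemma partial_sum_lemma (n0 : ℕ) (h1 : 1 ≤ n0) (j : ℕ) :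
    ∑ m ∈ Finset.range (n0 + 1 + j), (if n0 ≤ m then (m:ℝ) ^ (-(3:ℝ)/2) else 0)
      ≤ (n0:ℝ) ^ (-(3:ℝ)/2) + 2 * ((n0:ℝ) ^ (-(1:ℝ)/2) - ((n0 + j : ℕ):ℝ) ^ (-(1:ℝ)/2)) := by
  induction j with
  | zero =>
    have : ∑ m ∈ Finset.range (n0 + 1 + 0), (if n0 ≤ m then (m:ℝ) ^ (-(3:ℝ)/2) else 0)
        = (n0:ℝ) ^ (-(3:ℝ)/2) := by
      rw [Finset.sum_eq_single n0]
      · simp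
      · intro b hb hbne
        have hb' := Finset.mem_range.mp hb
        rw [if_neg]
        omega
      · intro h; exact absurd (Finset.mem_range.mpr (by omega)) h
    rw [this]
    simp
  | succ j ih =>
    have hr : n0 + 1 + (j + 1) = (n0 + 1 + j) + 1 := by omega
    rw [hr, Finset.sum_range_succ]
    have hcond : n0 ≤ n0 + 1 + j := by omega
    rw [if_pos hcond]
    have hstep : ((n0 + 1 + j : ℕ):ℝ) ^ (-(3:ℝ)/2)
        ≤ 2 * (((n0 + j : ℕ):ℝ) ^ (-(1:ℝ)/2) - ((n0 + 1 + j : ℕ):ℝ) ^ (-(1:ℝ)/2)) := by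
      have ha : (1:ℝ) ≤ ((n0 + j : ℕ):ℝ) := by
        have : 1 ≤ n0 + j := by omega
        exact_mod_cast this
      have hcast : ((n0 + 1 + j : ℕ):ℝ) = ((n0 + j : ℕ):ℝ) + 1 := by push_cast; ring
      rw [hcast]
      exact step_lemma _ ha
    have hcast2 : ((n0 + (j+1) : ℕ):ℝ) = ((n0 + 1 + j : ℕ):ℝ) := by norm_cast; omega
    rw [hcast2]
    linarith

lemma tail32_summable (n0 : ℕ) :
    Summable (fun m : ℕ => if n0 ≤ m then (m:ℝ) ^ (-(3:ℝ)/2) else 0) := by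
  apply Summable.of_nonneg_of_le (fun m => by positivity)
    (fun m => ?_) (Real.summable_nat_rpow.mpr (by norm_num : (-(3:ℝ)/2) < -1))
  split
  · exact le_refl _
  · positivity

lemma tail32_tsum (n0 : ℕ) (h1 : 1 ≤ n0) :
    (∑' m : ℕ, if n0 ≤ m then (m:ℝ) ^ (-(3:ℝ)/2) else 0) ≤ 3 * (n0:ℝ) ^ (-(1:ℝ)/2) := by
  have hn0 : (0:ℝ) < (n0:ℝ) := by exact_mod_cast h1
  apply Summable.tsum_le_of_sum_le (tail32_summable n0)
  intro F
  obtain ⟨n, hFn⟩ := F.exists_nat_subset_range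
  have h2 : ∑ m ∈ F, (if n0 ≤ m then (m:ℝ) ^ (-(3:ℝ)/2) else 0)
      ≤ ∑ m ∈ Finset.range (n0 + 1 + n), (if n0 ≤ m then (m:ℝ) ^ (-(3:ℝ)/2) else 0) := by
    apply Finset.sum_le_sum_of_subset_of_nonneg
    · exact hFn.trans (Finset.range_subset_range.mpr (by omega))
    · intro i _ _; positivity
  refine h2.trans ((partial_sum_lemma n0 h1 n).trans ?_)
  have h3 : (n0:ℝ) ^ (-(3:ℝ)/2) ≤ (n0:ℝ) ^ (-(1:ℝ)/2) := by
    apply Real.rpow_le_rpow_of_exponent_le (by exact_mod_cast h1)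
    norm_num
  have h4 : (0:ℝ) ≤ ((n0 + n : ℕ):ℝ) ^ (-(1:ℝ)/2) := by positivity
  linarith

lemma tailS_summable (β M : ℝ) (hβ : β ≤ -(3:ℝ)/2) :
    Summable (fun m : ℕ => if M < (m:ℝ) then (m:ℝ) ^ β else 0) := by
  apply Summable.of_nonneg_of_le (fun m => by positivity)
    (fun m => ?_) (Real.summable_nat_rpow.mpr (by linarith : β < -1))
  split
  · exact le_refl _
  · positivity

lemma tailS_tsum (β M : ℝ) (hβ : β ≤ -(3:ℝ)/2) (hM : 0 < M) :
    (∑' m : ℕ, if M < (m:ℝ) then (m:ℝ) ^ β else 0) ≤ 3 * M ^ (β + 1) := by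
  set n0 : ℕ := Nat.floor M + 1 with hn0def
  have h1 : 1 ≤ n0 := by omega
  have hn0R : (0:ℝ) < (n0:ℝ) := by exact_mod_cast h1
  have hMn0 : M ≤ (n0:ℝ) := by
    have := Nat.lt_floor_add_one M
    push_cast [hn0def]
    linarith
  have hcond : ∀ m : ℕ, (M < (m:ℝ)) ↔ (n0 ≤ m) := by
    intro m
    rw [hn0def, Nat.add_one_le_iff, Nat.floor_lt hM.le]
  -- pointwise bound
  have hpt : ∀ m : ℕ, (if M < (m:ℝ) then (m:ℝ) ^ β else 0)
      ≤ (n0:ℝ) ^ (β + 3/2) * (if n0 ≤ m then (m:ℝ) ^ (-(3:ℝ)/2) else 0) := by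
    intro m
    by_cases h : M < (m:ℝ)
    · rw [if_pos h, if_pos ((hcond m).mp h)]
      have hm0 : (0:ℝ) < (m:ℝ) := lt_trans hM h
      have hsplit : (m:ℝ) ^ β = (m:ℝ) ^ (β + 3/2) * (m:ℝ) ^ (-(3:ℝ)/2) := by
        rw [← Real.rpow_add hm0]; ring_nf
      rw [hsplit]
      apply mul_le_mul_of_nonneg_right _ (by positivity)
      apply Real.rpow_le_rpow_of_nonpos hn0R
      · exact_mod_cast (hcond m).mp h
      · linarith
    · rw [if_neg h]; positivity
  calc (∑' m : ℕ, if M < (m:ℝ) then (m:ℝ) ^ β else 0)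
      ≤ ∑' m : ℕ, (n0:ℝ) ^ (β + 3/2) * (if n0 ≤ m then (m:ℝ) ^ (-(3:ℝ)/2) else 0) :=
        (tailS_summable β M hβ).tsum_le_tsum hpt ((tail32_summable n0).mul_left _)
    _ = (n0:ℝ) ^ (β + 3/2) * ∑' m : ℕ, (if n0 ≤ m then (m:ℝ) ^ (-(3:ℝ)/2) else 0) :=
        tsum_mul_left
    _ ≤ (n0:ℝ) ^ (β + 3/2) * (3 * (n0:ℝ) ^ (-(1:ℝ)/2)) := by
        apply mul_le_mul_of_nonneg_left (tail32_tsum n0 h1) (by positivity)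
    _ = 3 * (n0:ℝ) ^ (β + 1) := by
        rw [mul_comm, mul_assoc, ← Real.rpow_add hn0R]
        ring_nf
    _ ≤ 3 * M ^ (β + 1) := by
        apply mul_le_mul_of_nonneg_left _ (by norm_num)
        apply Real.rpow_le_rpow_of_nonpos hM hMn0 (by linarith)

lemma tailU_eq (β u T : ℝ) (hu : 0 < u) (hT : 0 < T) :
    (fun m : ℕ => if T < u * (m:ℝ) then (u * (m:ℝ)) ^ β else 0)
      = fun m : ℕ => u ^ β * (if T / u < (m:ℝ) then (m:ℝ) ^ β else 0) := by
  funext m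
  by_cases h : T < u * (m:ℝ)
  · have hm0 : (0:ℝ) < (m:ℝ) := by
      by_contra hc
      push_neg at hc
      nlinarith
    rw [if_pos h, if_pos (by rwa [div_lt_iff₀ hu, mul_comm]), Real.mul_rpow hu.le hm0.le]
  · rw [if_neg h, if_neg (by rw [div_lt_iff₀ hu, mul_comm]; exact h), mul_zero]

lemma tailU_summable (β u T : ℝ) (hβ : β ≤ -(3:ℝ)/2) (hu : 0 < u) (hT : 0 < T) :
    Summable (fun m : ℕ => if T < u * (m:ℝ) then (u * (m:ℝ)) ^ β else 0) := by
  rw [tailU_eq β u T hu hT]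
  exact (tailS_summable β (T/u) hβ).mul_left _

lemma tailU_tsum (β u T : ℝ) (hβ : β ≤ -(3:ℝ)/2) (hu : 0 < u) (hT : 0 < T) :
    (∑' m : ℕ, if T < u * (m:ℝ) then (u * (m:ℝ)) ^ β else 0) ≤ 3 * T ^ (β + 1) / u := by
  rw [tailU_eq β u T hu hT, tsum_mul_left]
  have h1 : u ^ β * (∑' m : ℕ, if T / u < (m:ℝ) then (m:ℝ) ^ β else 0)
      ≤ u ^ β * (3 * (T/u) ^ (β + 1)) :=
    mul_le_mul_of_nonneg_left (tailS_tsum β (T/u) hβ (by positivity)) (by positivity)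
  refine h1.trans_eq ?_
  rw [Real.div_rpow hT.le hu.le, Real.rpow_add hu, Real.rpow_one]
  field_simp

lemma divisor_count_le (ε : ℝ) (hε : 0 < ε) :
    ∃ C : ℝ, 1 ≤ C ∧ ∀ s : ℕ, 0 < s → ((s.divisors.card : ℝ)) ≤ C * (s:ℝ) ^ ε := by
  have hlog2 : (0:ℝ) < Real.log 2 := Real.log_pos (by norm_num)
  set c : ℝ := ε * Real.log 2 with hc
  have hc0 : 0 < c := by positivity
  set A : ℝ := 1 + 1/c with hA
  have hA1 : 1 ≤ A := by
    have h1c : 0 < 1/c := by positivity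
    rw [hA]
    linarith
  set Q : ℕ := Nat.ceil ((2:ℝ) ^ (1/ε)) with hQ
  refine ⟨A ^ (Q + 1), one_le_pow₀ hA1, ?_⟩
  intro s hs
  -- termwise bound
  have hterm : ∀ p ∈ s.factorization.support,
      ((s.factorization p + 1 : ℕ) : ℝ)
        ≤ (if p ≤ Q then A else 1) * ((p:ℝ) ^ (s.factorization p : ℕ)) ^ ε := by
    intro p hp
    have hpp : p.Prime := Nat.prime_of_mem_primeFactors (by rwa [Nat.support_factorization] at hp)
    have hp2 : (2:ℝ) ≤ (p:ℝ) := by exact_mod_cast hpp.two_le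
    have hp0 : (0:ℝ) ≤ (p:ℝ) := by linarith
    set k : ℕ := s.factorization p with hk
    have hrw : ((p:ℝ) ^ (k : ℕ)) ^ ε = (p:ℝ) ^ ((k:ℝ) * ε) := by
      rw [Real.rpow_natCast_mul hp0]
    rw [hrw]
    by_cases hpQ : p ≤ Q
    · rw [if_pos hpQ]
      have h2 : (2:ℝ) ^ ((k:ℝ) * ε) ≤ (p:ℝ) ^ ((k:ℝ) * ε) :=
        Real.rpow_le_rpow (by norm_num) hp2 (by positivity)
      have h3 : (2:ℝ) ^ ((k:ℝ) * ε) = Real.exp ((k:ℝ) * c) := by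
        rw [Real.rpow_def_of_pos (by norm_num : (0:ℝ) < 2), hc]
        ring_nf
      have h4 : (k:ℝ) * c + 1 ≤ Real.exp ((k:ℝ) * c) := Real.add_one_le_exp _
      have h5 : ((k + 1 : ℕ):ℝ) ≤ A * ((k:ℝ) * c + 1) := by
        push_cast
        rw [hA]
        have hkc : 0 ≤ (k:ℝ) * c := by positivity
        have he : (1 + 1/c) * ((k:ℝ)*c + 1) = 1 + (k:ℝ)*c + 1/c + (k:ℝ) := by
          field_simp
          ring
        rw [he]
        have h1c : 0 < 1/c := by positivity
        linarith
      calc ((k + 1 : ℕ):ℝ) ≤ A * ((k:ℝ) * c + 1) := h5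
        _ ≤ A * Real.exp ((k:ℝ)*c) := by
            apply mul_le_mul_of_nonneg_left (by linarith) (by linarith)
        _ = A * (2:ℝ) ^ ((k:ℝ) * ε) := by rw [h3]
        _ ≤ A * (p:ℝ) ^ ((k:ℝ) * ε) := mul_le_mul_of_nonneg_left h2 (by linarith)
    · rw [if_neg hpQ, one_mul]
      push_neg at hpQ
      have hQp : (2:ℝ) ^ (1/ε) ≤ (p:ℝ) := by
        calc (2:ℝ) ^ (1/ε) ≤ (Q:ℝ) := Nat.le_ceil _
          _ ≤ (p:ℝ) := by exact_mod_cast hpQ.le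
      have h2 : ((2:ℝ) ^ (1/ε)) ^ ((k:ℝ) * ε) ≤ (p:ℝ) ^ ((k:ℝ) * ε) :=
        Real.rpow_le_rpow (by positivity) hQp (by positivity)
      have h3 : ((2:ℝ) ^ (1/ε)) ^ ((k:ℝ) * ε) = (2:ℝ) ^ (k:ℝ) := by
        rw [← Real.rpow_mul (by norm_num : (0:ℝ) ≤ 2)]
        congr 1
        field_simp
      have h4 : ((k + 1 : ℕ):ℝ) ≤ (2:ℝ) ^ (k:ℝ) := by
        rw [Real.rpow_natCast]
        exact_mod_cast (Nat.lt_two_pow_self (n := k))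
      calc ((k + 1 : ℕ):ℝ) ≤ (2:ℝ) ^ (k:ℝ) := h4
        _ = ((2:ℝ) ^ (1/ε)) ^ ((k:ℝ) * ε) := h3.symm
        _ ≤ (p:ℝ) ^ ((k:ℝ) * ε) := h2
  -- assemble
  have hcard : ((s.divisors.card : ℕ):ℝ)
      = ∏ p ∈ s.factorization.support, ((s.factorization p + 1 : ℕ):ℝ) := by
    rw [Nat.card_divisors hs.ne']
    push_cast
    rfl
  have hsrw : (s:ℝ) ^ ε = ∏ p ∈ s.factorization.support, ((p:ℝ) ^ (s.factorization p : ℕ)) ^ ε := by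
    rw [Real.finset_prod_rpow _ _ (fun p _ => by positivity)]
    congr 1
    have := Nat.factorization_prod_pow_eq_self hs.ne'
    rw [show s.factorization.prod (fun p k => p ^ k)
        = ∏ p ∈ s.factorization.support, p ^ (s.factorization p) from rfl] at this
    exact_mod_cast (congrArg (fun n : ℕ => (n:ℝ)) this).symm
  rw [hcard, hsrw]
  calc (∏ p ∈ s.factorization.support, ((s.factorization p + 1 : ℕ):ℝ))
      ≤ ∏ p ∈ s.factorization.support,
          ((if p ≤ Q then A else 1) * ((p:ℝ) ^ (s.factorization p : ℕ)) ^ ε) := by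
        apply Finset.prod_le_prod (fun p _ => by positivity) hterm
    _ = (∏ p ∈ s.factorization.support, (if p ≤ Q then A else 1))
        * ∏ p ∈ s.factorization.support, ((p:ℝ) ^ (s.factorization p : ℕ)) ^ ε := by
        rw [Finset.prod_mul_distrib]
    _ ≤ A ^ (Q + 1) * ∏ p ∈ s.factorization.support, ((p:ℝ) ^ (s.factorization p : ℕ)) ^ ε := by
        apply mul_le_mul_of_nonneg_right _ (Finset.prod_nonneg (fun p _ => by positivity))
        have he : (∏ p ∈ s.factorization.support, if p ≤ Q then A else 1)
            = ∏ p ∈ s.factorization.support.filter (· ≤ Q), A :=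
          (Finset.prod_filter (· ≤ Q) (fun _ => A)).symm
        rw [he, Finset.prod_const]
        apply pow_le_pow_right₀ hA1
        have hsub : s.factorization.support.filter (· ≤ Q) ⊆ Finset.range (Q + 1) := by
          intro p hp
          simp only [Finset.mem_filter] at hp
          exact Finset.mem_range.mpr (by omega)
        calc (s.factorization.support.filter (· ≤ Q)).card
            ≤ (Finset.range (Q+1)).card := Finset.card_le_card hsub
          _ = Q + 1 := Finset.card_range _

noncomputable def Haux (N d : ℕ) (T β : ℝ) (c : ℕ) : ℝ :=
  if (d ∣ c ∧ T < (N:ℝ)*(c:ℝ)) then Real.sqrt N * Real.sqrt d * ((N:ℝ)*(c:ℝ)) ^ β else 0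

lemma Haux_nonneg (N d : ℕ) (T β : ℝ) (c : ℕ) : 0 ≤ Haux N d T β c := by
  unfold Haux; split
  · positivity
  · exact le_refl 0

lemma cpos_of_T (N c : ℕ) (T : ℝ) (hT : 0 < T) (h : T < (N:ℝ)*(c:ℝ)) : 1 ≤ c := by
  by_contra hc
  push_neg at hc
  interval_cases c
  simp at h
  linarith

lemma Haux_le (N d : ℕ) (T β : ℝ) (hβ : β ≤ -(3:ℝ)/2) (hN : 1 ≤ N) (hT : 0 < T) (c : ℕ) :
    Haux N d T β c ≤ (Real.sqrt N * Real.sqrt d) * (c:ℝ) ^ β := by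
  unfold Haux
  split
  · rename_i h
    obtain ⟨hdc, hTc⟩ := h
    have hc1 : 1 ≤ c := cpos_of_T N c T hT hTc
    have hc0 : (0:ℝ) < (c:ℝ) := by exact_mod_cast hc1
    apply mul_le_mul_of_nonneg_left _ (by positivity : (0:ℝ) ≤ Real.sqrt N * Real.sqrt d)
    apply Real.rpow_le_rpow_of_nonpos hc0 _ (by linarith)
    have hN' : (1:ℝ) ≤ (N:ℝ) := by exact_mod_cast hN
    nlinarith
  · positivity


lemma Haux_summable (N d : ℕ) (T β : ℝ) (hβ : β ≤ -(3:ℝ)/2) (hN : 1 ≤ N) (hT : 0 < T) :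
    Summable (Haux N d T β) :=
  Summable.of_nonneg_of_le (Haux_nonneg N d T β) (Haux_le N d T β hβ hN hT)
    ((Real.summable_nat_rpow.mpr (by linarith : β < -1)).mul_left _)

lemma Haux_tsum (N d : ℕ) (T β : ℝ) (hβ : β ≤ -(3:ℝ)/2) (hN : 1 ≤ N) (hd : 1 ≤ d)
    (hT : 0 < T) :
    ∑' c, Haux N d T β c ≤ Real.sqrt N * Real.sqrt d * (3 * T ^ (β+1) / ((N:ℝ)*(d:ℝ))) := by
  have hdN : (0:ℝ) < (d:ℝ) := by exact_mod_cast hd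
  have hNN : (0:ℝ) < (N:ℝ) := by exact_mod_cast hN
  have hu : (0:ℝ) < (N:ℝ)*(d:ℝ) := by positivity
  have hinj : Function.Injective (fun m : ℕ => d * m) := fun a b h => by
    exact Nat.eq_of_mul_eq_mul_left hd h
  have hsupp : Function.support (Haux N d T β) ⊆ Set.range (fun m : ℕ => d * m) := by
    intro c hc
    rw [Function.mem_support] at hc
    unfold Haux at hc
    by_cases h : d ∣ c ∧ T < (N:ℝ)*(c:ℝ)
    · exact ⟨c / d, (Nat.mul_div_cancel' h.1)⟩
    · exact absurd (if_neg h) hc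
  have h1 : ∑' c, Haux N d T β c = ∑' m, Haux N d T β (d * m) := (hinj.tsum_eq hsupp).symm
  have h2 : ∀ m : ℕ, Haux N d T β (d * m)
      = (Real.sqrt N * Real.sqrt d) *
        (if T < ((N:ℝ)*(d:ℝ)) * (m:ℝ) then (((N:ℝ)*(d:ℝ)) * (m:ℝ)) ^ β else 0) := by
    intro m
    unfold Haux
    have hcast : ((d*m : ℕ):ℝ) = (d:ℝ)*(m:ℝ) := by push_cast; ring
    rw [hcast]
    have hco : (N:ℝ) * ((d:ℝ)*(m:ℝ)) = ((N:ℝ)*(d:ℝ))*(m:ℝ) := by ring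
    rw [hco]
    simp only [dvd_mul_right, true_and]
    split
    · ring
    · rw [mul_zero]
  rw [h1]
  simp only [h2]
  rw [tsum_mul_left]
  exact mul_le_mul_of_nonneg_left (tailU_tsum β ((N:ℝ)*(d:ℝ)) T hβ hu hT) (by positivity)


/-- For every `ε > 0` and every integer `k ≥ 3` there is a constant `C(ε,k)` such that
for all positive integers `N, s` and every real `τ > 0`, the convergent series
`∑_{c ≥ 1, Nc > τ/s} gcd(s, Nc)^{1/2} (Nc)^{3/2-k}` is at most
`C(ε,k) · N^{-1/2+ε} · (τ/s)^{5/2-k} · s^ε`. -/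
theorem sum_gcd_rpow_tail_le (ε : ℝ) (hε : 0 < ε) (k : ℕ) (hk : 3 ≤ k) :
    ∃ C : ℝ, ∀ (N s : ℕ), 0 < N → 0 < s → ∀ τ : ℝ, 0 < τ →
      Summable (fun c : ℕ =>
        if 1 ≤ c ∧ τ / s < (N * c : ℝ) then
          Real.sqrt (Nat.gcd s (N * c)) * (N * c : ℝ) ^ ((3 : ℝ) / 2 - k)
        else 0) ∧
      (∑' c : ℕ,
        if 1 ≤ c ∧ τ / s < (N * c : ℝ) then
          Real.sqrt (Nat.gcd s (N * c)) * (N * c : ℝ) ^ ((3 : ℝ) / 2 - k)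
        else 0)
        ≤ C * (N : ℝ) ^ (-(1 : ℝ) / 2 + ε) * (τ / s) ^ ((5 : ℝ) / 2 - k) * (s : ℝ) ^ ε := by
  obtain ⟨C₀, hC₀1, hC₀⟩ := divisor_count_le ε hε
  refine ⟨3 * C₀, ?_⟩
  intro N s hN hs τ hτ
  set T : ℝ := τ / (s:ℝ) with hTdef
  have hT : 0 < T := by
    have : (0:ℝ) < (s:ℝ) := by exact_mod_cast hs
    positivity
  set β : ℝ := (3:ℝ)/2 - (k:ℕ) with hβdef
  have hkR : (3:ℝ) ≤ (k:ℝ) := by exact_mod_cast hk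
  have hβ : β ≤ -(3:ℝ)/2 := by rw [hβdef]; linarith
  have hβ1 : β < -1 := lt_of_le_of_lt hβ (by norm_num)
  set f : ℕ → ℝ := fun c : ℕ =>
    if 1 ≤ c ∧ T < (N:ℝ) * (c:ℝ) then
      Real.sqrt (Nat.gcd s (N * c)) * ((N:ℝ) * (c:ℝ)) ^ β else 0 with hfdef
  have hf_nonneg : ∀ c, 0 ≤ f c := by
    intro c; rw [hfdef]; dsimp only; split
    · positivity
    · exact le_refl 0
  have hf_le : ∀ c, f c ≤ Real.sqrt s * (c:ℝ) ^ β := by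
    intro c; rw [hfdef]; dsimp only
    split
    · rename_i h
      obtain ⟨hc1, hTc⟩ := h
      have hc0 : (0:ℝ) < (c:ℝ) := by exact_mod_cast hc1
      have hg : ((Nat.gcd s (N * c) : ℕ):ℝ) ≤ (s:ℝ) := by
        exact_mod_cast Nat.le_of_dvd hs (Nat.gcd_dvd_left _ _)
      apply mul_le_mul (Real.sqrt_le_sqrt hg) _ (by positivity) (Real.sqrt_nonneg _)
      apply Real.rpow_le_rpow_of_nonpos hc0 _ (by linarith)
      have hN' : (1:ℝ) ≤ (N:ℝ) := by exact_mod_cast hN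
      nlinarith
    · positivity
  have hf_sum : Summable f :=
    Summable.of_nonneg_of_le hf_nonneg hf_le
      ((Real.summable_nat_rpow.mpr hβ1).mul_left _)
  -- pointwise domination by divisor sums
  have key : ∀ c, f c ≤ ∑ d ∈ s.divisors, Haux N d T β c := by
    intro c
    rw [hfdef]; dsimp only
    split
    · rename_i h
      obtain ⟨hc1, hTc⟩ := h
      set d : ℕ := Nat.gcd s c with hddef
      have hd_pos : 0 < d := Nat.gcd_pos_of_pos_left _ hs
      have hd_mem : d ∈ s.divisors := Nat.mem_divisors.mpr ⟨Nat.gcd_dvd_left _ _, hs.ne'⟩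
      have hdvd : Nat.gcd s (N * c) ∣ N * d := by
        have h1 : Nat.gcd s (N * c) ∣ Nat.gcd s N * Nat.gcd s c := by
          rw [← gcd_eq_nat_gcd, ← gcd_eq_nat_gcd, ← gcd_eq_nat_gcd]
          exact gcd_mul_dvd_mul_gcd s N c
        exact h1.trans (mul_dvd_mul_right (Nat.gcd_dvd_right s N) _)
      have hle : Real.sqrt (Nat.gcd s (N * c)) ≤ Real.sqrt N * Real.sqrt d := by
        rw [← Real.sqrt_mul (by positivity) (d:ℝ)]
        apply Real.sqrt_le_sqrt
        have : ((Nat.gcd s (N*c) : ℕ):ℝ) ≤ ((N * d : ℕ):ℝ) := by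
          exact_mod_cast Nat.le_of_dvd (by positivity) hdvd
        push_cast at this ⊢
        linarith
      have hHd : Haux N d T β c
          = Real.sqrt N * Real.sqrt d * ((N:ℝ)*(c:ℝ)) ^ β := by
        unfold Haux
        rw [if_pos ⟨Nat.gcd_dvd_right s c, hTc⟩]
      calc Real.sqrt (Nat.gcd s (N * c)) * ((N:ℝ) * (c:ℝ)) ^ β
          ≤ (Real.sqrt N * Real.sqrt d) * ((N:ℝ) * (c:ℝ)) ^ β :=
            mul_le_mul_of_nonneg_right hle (by positivity)
        _ = Haux N d T β c := hHd.symm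
        _ ≤ ∑ d' ∈ s.divisors, Haux N d' T β c :=
            Finset.single_le_sum (fun d' _ => Haux_nonneg N d' T β c) hd_mem
    · exact Finset.sum_nonneg (fun d' _ => Haux_nonneg N d' T β c)
  have hHsum : ∀ d ∈ s.divisors, Summable (Haux N d T β) :=
    fun d _ => Haux_summable N d T β hβ hN hT
  have step1 : ∑' c, f c ≤ ∑ d ∈ s.divisors, ∑' c, Haux N d T β c := by
    calc ∑' c, f c ≤ ∑' c, ∑ d ∈ s.divisors, Haux N d T β c :=
          hf_sum.tsum_le_tsum key (summable_sum hHsum)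
      _ = ∑ d ∈ s.divisors, ∑' c, Haux N d T β c := Summable.tsum_finsetSum hHsum
  have step2 : ∀ d ∈ s.divisors, ∑' c, Haux N d T β c
      ≤ 3 * T ^ (β+1) / Real.sqrt N := by
    intro d hd
    obtain ⟨hdvd, -⟩ := Nat.mem_divisors.mp hd
    have hd1 : 1 ≤ d := Nat.pos_of_dvd_of_pos hdvd hs
    refine (Haux_tsum N d T β hβ hN hd1 hT).trans ?_
    have hNN : (0:ℝ) < (N:ℝ) := by exact_mod_cast hN
    have hdd : (0:ℝ) < (d:ℝ) := by exact_mod_cast hd1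
    have hsN : Real.sqrt N * Real.sqrt N = (N:ℝ) := Real.mul_self_sqrt hNN.le
    have hsd : Real.sqrt d * Real.sqrt d = (d:ℝ) := Real.mul_self_sqrt hdd.le
    have hsN0 : 0 < Real.sqrt N := Real.sqrt_pos.mpr hNN
    have hsd0 : 0 < Real.sqrt d := Real.sqrt_pos.mpr hdd
    have heq : Real.sqrt N * Real.sqrt d * (3 * T ^ (β+1) / ((N:ℝ)*(d:ℝ)))
        = 3 * T ^ (β+1) / (Real.sqrt N * Real.sqrt d) := by
      field_simp
      rw [Real.sq_sqrt hNN.le, Real.sq_sqrt hdd.le]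
    rw [heq]
    apply div_le_div_of_nonneg_left (by positivity) (by positivity)
    have h1d : (1:ℝ) ≤ Real.sqrt d := by
      rw [show (1:ℝ) = Real.sqrt 1 from (Real.sqrt_one).symm]
      exact Real.sqrt_le_sqrt (by exact_mod_cast hd1)
    nlinarith
  have step3 : ∑ d ∈ s.divisors, ∑' c, Haux N d T β c
      ≤ C₀ * (s:ℝ) ^ ε * (3 * T ^ (β+1) / Real.sqrt N) := by
    calc ∑ d ∈ s.divisors, ∑' c, Haux N d T β c
        ≤ ∑ _d ∈ s.divisors, (3 * T ^ (β+1) / Real.sqrt N) := Finset.sum_le_sum step2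
      _ = (s.divisors.card : ℝ) * (3 * T ^ (β+1) / Real.sqrt N) := by
          rw [Finset.sum_const, nsmul_eq_mul]
      _ ≤ C₀ * (s:ℝ) ^ ε * (3 * T ^ (β+1) / Real.sqrt N) := by
          apply mul_le_mul_of_nonneg_right (hC₀ s hs) (by positivity)
  -- final arithmetic
  have hNN : (0:ℝ) < (N:ℝ) := by exact_mod_cast hN
  have hN1 : (1:ℝ) ≤ (N:ℝ) := by exact_mod_cast hN
  have hinv : 1 / Real.sqrt N = (N:ℝ) ^ (-(1:ℝ)/2) := by
    rw [Real.sqrt_eq_rpow, one_div, ← Real.rpow_neg hNN.le]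
    norm_num
  have hmono : (N:ℝ) ^ (-(1:ℝ)/2) ≤ (N:ℝ) ^ (-(1:ℝ)/2 + ε) :=
    Real.rpow_le_rpow_of_exponent_le hN1 (by linarith)
  have step4 : C₀ * (s:ℝ) ^ ε * (3 * T ^ (β+1) / Real.sqrt N)
      ≤ 3 * C₀ * (N:ℝ) ^ (-(1:ℝ)/2 + ε) * T ^ (β+1) * (s:ℝ) ^ ε := by
    have e1 : C₀ * (s:ℝ) ^ ε * (3 * T ^ (β+1) / Real.sqrt N)
        = 3 * C₀ * (1 / Real.sqrt N) * T ^ (β+1) * (s:ℝ) ^ ε := by ring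
    rw [e1, hinv]
    have hfac : (0:ℝ) ≤ 3 * C₀ := by linarith
    gcongr
  have hβeq : β + 1 = (5:ℝ)/2 - (k:ℝ) := by rw [hβdef]; ring
  rw [hβeq] at step3 step4
  constructor
  · exact hf_sum
  · exact le_trans (le_trans step1 step3) step4
end

section
/- Let M = [[A,B],[C,D]] and M' = [[A',B'],[C,D']] be elements of Sp(4,ℤ) (2×2 blocks) with the same lower-left block C satisfying det C ≠ 0. Then Γ∞ M Γ∞ = Γ∞ M' Γ∞ if and only if D' − D ∈ CΛ, i.e. if and only if there exists S ∈ Λ with D' = D + CS. -/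
open Matrix

/-- 2×2 integer matrices. -/
abbrev M2Z := Matrix (Fin 2) (Fin 2) ℤ

/-- 4×4 integer matrices, indexed in 2×2 blocks. -/
abbrev M4Z := Matrix (Fin 2 ⊕ Fin 2) (Fin 2 ⊕ Fin 2) ℤ

/-- The standard symplectic form `J = [[0, 1₂], [−1₂, 0]]`. -/
def J4 : M4Z := Matrix.fromBlocks 0 1 (-1) 0

/-- `Sp(4,ℤ)`: integer matrices `M` with `ᵀM J M = J`. -/
def Sp4 : Set M4Z := {M | Mᵀ * J4 * M = J4}

/-- `u(S) = [[1₂, S], [0, 1₂]]`. -/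
def uMat (S : M2Z) : M4Z := Matrix.fromBlocks 1 S 0 1

/-- `Γ∞ = {u(S) : S ∈ Λ}`, where `Λ` is the set of symmetric integer 2×2 matrices. -/
def GammaInf : Set M4Z := {M | ∃ S : M2Z, Sᵀ = S ∧ M = uMat S}

/-- The double coset `Γ∞ M Γ∞`. -/
def doubleCoset (M : M4Z) : Set M4Z :=
  {X | ∃ γ₁ ∈ GammaInf, ∃ γ₂ ∈ GammaInf, X = γ₁ * M * γ₂}

lemma uMat_mul (S T : M2Z) : uMat S * uMat T = uMat (S + T) := by
  simp [uMat, fromBlocks_multiply, add_comm]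

lemma uMat_zero : uMat 0 = 1 := by
  simp [uMat, ← fromBlocks_one]

lemma sp4_mulblocks {A B C D : M2Z} (h : Matrix.fromBlocks A B C D ∈ Sp4) :
    Aᵀ*C = Cᵀ*A ∧ Aᵀ*D - Cᵀ*B = 1 ∧ Bᵀ*D = Dᵀ*B := by
  have h' : Matrix.fromBlocks (Aᵀ*C - Cᵀ*A) (Aᵀ*D - Cᵀ*B) (Bᵀ*C - Dᵀ*A) (Bᵀ*D - Dᵀ*B)
      = Matrix.fromBlocks 0 1 (-1) 0 := by
    have h2 := h
    simp only [Sp4, Set.mem_setOf_eq, J4, fromBlocks_transpose, fromBlocks_multiply] at h2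
    rw [← h2]
    congr 1 <;> noncomm_ring
  have h11 := congrArg Matrix.toBlocks₁₁ h'
  have h12 := congrArg Matrix.toBlocks₁₂ h'
  have h22 := congrArg Matrix.toBlocks₂₂ h'
  simp only [toBlocks_fromBlocks₁₁, toBlocks_fromBlocks₁₂, toBlocks_fromBlocks₂₂] at h11 h12 h22
  exact ⟨by linear_combination (norm := noncomm_ring) h11, h12,
    by linear_combination (norm := noncomm_ring) h22⟩

lemma sp4_inv {A B C D : M2Z} (h : Matrix.fromBlocks A B C D ∈ Sp4) :
    Matrix.fromBlocks Dᵀ (-Bᵀ) (-Cᵀ) Aᵀ * Matrix.fromBlocks A B C D = 1 := by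
  obtain ⟨e1, e2, e3⟩ := sp4_mulblocks h
  have e2' : Dᵀ*A - Bᵀ*C = 1 := by
    have := congrArg Matrix.transpose e2
    simp only [transpose_sub, transpose_mul, transpose_transpose, transpose_one] at this
    linear_combination (norm := noncomm_ring) this
  rw [fromBlocks_multiply, ← fromBlocks_one, fromBlocks_inj]
  refine ⟨by linear_combination (norm := noncomm_ring) e2',
    by linear_combination (norm := noncomm_ring) -e3,
    by linear_combination (norm := noncomm_ring) e1,
    by linear_combination (norm := noncomm_ring) e2⟩

lemma one_mem_GammaInf : (1 : M4Z) ∈ GammaInf :=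
  ⟨0, by simp, uMat_zero.symm⟩

lemma GammaInf_mul {x y : M4Z} (hx : x ∈ GammaInf) (hy : y ∈ GammaInf) :
    x * y ∈ GammaInf := by
  obtain ⟨S, hS, rfl⟩ := hx
  obtain ⟨T, hT, rfl⟩ := hy
  exact ⟨S + T, by rw [transpose_add, hS, hT], uMat_mul S T⟩

lemma uMat_mem_GammaInf {S : M2Z} (hS : Sᵀ = S) : uMat S ∈ GammaInf := ⟨S, hS, rfl⟩

lemma doubleCoset_eq_of_rel {M M' : M4Z} (T S : M2Z) (hT : Tᵀ = T) (hS : Sᵀ = S)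
    (h : M' = uMat T * M * uMat S) : doubleCoset M = doubleCoset M' := by
  have hM : M = uMat (-T) * M' * uMat (-S) := by
    rw [h]
    rw [show uMat (-T) * (uMat T * M * uMat S) * uMat (-S)
        = (uMat (-T) * uMat T) * M * (uMat S * uMat (-S)) by noncomm_ring]
    rw [uMat_mul, uMat_mul]
    simp [uMat_zero]
  ext X
  constructor
  · rintro ⟨γ₁, h₁, γ₂, h₂, rfl⟩
    refine ⟨γ₁ * uMat (-T), GammaInf_mul h₁ (uMat_mem_GammaInf (by simp [hT])),
      uMat (-S) * γ₂, GammaInf_mul (uMat_mem_GammaInf (by simp [hS])) h₂, ?_⟩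
    rw [hM]; noncomm_ring
  · rintro ⟨γ₁, h₁, γ₂, h₂, rfl⟩
    refine ⟨γ₁ * uMat T, GammaInf_mul h₁ (uMat_mem_GammaInf hT),
      uMat S * γ₂, GammaInf_mul (uMat_mem_GammaInf hS) h₂, ?_⟩
    rw [h]; noncomm_ring

lemma sp4_mul {x y : M4Z} (hx : x ∈ Sp4) (hy : y ∈ Sp4) : x * y ∈ Sp4 := by
  simp only [Sp4, Set.mem_setOf_eq] at *
  rw [transpose_mul]
  calc yᵀ * xᵀ * J4 * (x * y) = yᵀ * (xᵀ * J4 * x) * y := by noncomm_ring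
    _ = J4 := by rw [hx, hy]

lemma uMat_mem_Sp4 {S : M2Z} (hS : Sᵀ = S) : uMat S ∈ Sp4 := by
  simp only [Sp4, Set.mem_setOf_eq, uMat, J4, fromBlocks_transpose, fromBlocks_multiply]
  rw [fromBlocks_inj]
  refine ⟨by simp, by simp, by simp, ?_⟩
  simp [hS]

lemma doubleCoset_eq_of_rel' {M M' N γ : M4Z} (hN : N ∈ GammaInf) (hγ : γ ∈ GammaInf)
    (h : M' = N * M * γ) : doubleCoset M = doubleCoset M' := by
  obtain ⟨T, hT, rfl⟩ := hN
  obtain ⟨S, hS, rfl⟩ := hγ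
  exact doubleCoset_eq_of_rel T S hT hS h

lemma mem_GammaInf_of {N : M4Z} (hN : N ∈ Sp4) (h21 : N.toBlocks₂₁ = 0)
    (h22 : N.toBlocks₂₂ = 1) : N ∈ GammaInf := by
  have hNblk : N = Matrix.fromBlocks N.toBlocks₁₁ N.toBlocks₁₂ 0 1 := by
    conv_lhs => rw [← fromBlocks_toBlocks N]
    rw [h21, h22]
  rw [hNblk] at hN
  obtain ⟨e1, e2, e3⟩ := sp4_mulblocks hN
  have hA : N.toBlocks₁₁ = 1 := by
    have hAt : N.toBlocks₁₁ᵀ = 1 := by simpa using e2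
    calc N.toBlocks₁₁ = N.toBlocks₁₁ᵀᵀ := (transpose_transpose _).symm
      _ = 1 := by rw [hAt, transpose_one]
  have hB : N.toBlocks₁₂ᵀ = N.toBlocks₁₂ := by simpa using e3
  exact ⟨N.toBlocks₁₂, hB, by rw [hNblk, hA]; rfl⟩


/-- For `M = [[A,B],[C,D]]` and `M' = [[A',B'],[C,D']]` in `Sp(4,ℤ)` with the same
lower-left block `C` of nonzero determinant, `Γ∞ M Γ∞ = Γ∞ M' Γ∞` iff `D' − D ∈ CΛ`,
i.e. iff `D' = D + CS` for some symmetric integer `S`. -/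
theorem double_coset_eq_iff (M M' : M4Z) (hM : M ∈ Sp4) (hM' : M' ∈ Sp4)
    (hCeq : M'.toBlocks₂₁ = M.toBlocks₂₁) (hC : (M.toBlocks₂₁).det ≠ 0) :
    doubleCoset M = doubleCoset M' ↔
      ∃ S : M2Z, Sᵀ = S ∧ M'.toBlocks₂₂ = M.toBlocks₂₂ + M.toBlocks₂₁ * S := by
  obtain ⟨A, B, C, D, rfl⟩ : ∃ A B C D : M2Z, M = Matrix.fromBlocks A B C D :=
    ⟨_, _, _, _, (fromBlocks_toBlocks M).symm⟩
  obtain ⟨A', B', C', D', rfl⟩ : ∃ A B C D : M2Z, M' = Matrix.fromBlocks A B C D :=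
    ⟨_, _, _, _, (fromBlocks_toBlocks M').symm⟩
  simp only [toBlocks_fromBlocks₂₁, toBlocks_fromBlocks₂₂] at hCeq hC ⊢
  subst hCeq
  constructor
  · intro h
    have hmem : Matrix.fromBlocks A' B' C' D' ∈ doubleCoset (Matrix.fromBlocks A B C' D) := by
      rw [h]
      exact ⟨1, one_mem_GammaInf, 1, one_mem_GammaInf, by simp⟩
    obtain ⟨γ₁, ⟨S₁, hS₁, rfl⟩, γ₂, ⟨S₂, hS₂, rfl⟩, hEq⟩ := hmem
    refine ⟨S₂, hS₂, ?_⟩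
    have h22 := congrArg Matrix.toBlocks₂₂ hEq
    simp only [uMat, fromBlocks_multiply, toBlocks_fromBlocks₂₂] at h22
    linear_combination (norm := noncomm_ring) h22
  · rintro ⟨S, hS, hD⟩
    have hinv := sp4_inv hM
    have hinv2 := mul_eq_one_comm.mp hinv
    have hinv2' := mul_eq_one_comm.mp (sp4_inv hM')
    rw [fromBlocks_multiply, ← fromBlocks_one, fromBlocks_inj] at hinv2 hinv2'
    obtain ⟨p11, p12, p21, p22⟩ := hinv2
    obtain ⟨q11, q12, q21, q22⟩ := hinv2'
    have hinv2 : Matrix.fromBlocks A B C' D * Matrix.fromBlocks Dᵀ (-Bᵀ) (-C'ᵀ) Aᵀ = 1 :=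
      mul_eq_one_comm.mp hinv
    have hMinvSp : Matrix.fromBlocks Dᵀ (-Bᵀ) (-C'ᵀ) Aᵀ ∈ Sp4 := by
      simp only [Sp4, Set.mem_setOf_eq] at hM ⊢
      calc (Matrix.fromBlocks Dᵀ (-Bᵀ) (-C'ᵀ) Aᵀ)ᵀ * J4 * Matrix.fromBlocks Dᵀ (-Bᵀ) (-C'ᵀ) Aᵀ
          = (Matrix.fromBlocks Dᵀ (-Bᵀ) (-C'ᵀ) Aᵀ)ᵀ *
              ((Matrix.fromBlocks A B C' D)ᵀ * J4 * Matrix.fromBlocks A B C' D) *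
              Matrix.fromBlocks Dᵀ (-Bᵀ) (-C'ᵀ) Aᵀ := by rw [hM]
        _ = (Matrix.fromBlocks A B C' D * Matrix.fromBlocks Dᵀ (-Bᵀ) (-C'ᵀ) Aᵀ)ᵀ * J4 *
              (Matrix.fromBlocks A B C' D * Matrix.fromBlocks Dᵀ (-Bᵀ) (-C'ᵀ) Aᵀ) := by
            rw [transpose_mul]; noncomm_ring
        _ = J4 := by rw [hinv2]; simp
    set N := Matrix.fromBlocks A' B' C' D' * uMat (-S) * Matrix.fromBlocks Dᵀ (-Bᵀ) (-C'ᵀ) Aᵀ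
      with hNdef
    have hNsp : N ∈ Sp4 :=
      sp4_mul (sp4_mul hM' (uMat_mem_Sp4 (by rw [transpose_neg, hS]))) hMinvSp
    have e21 : N.toBlocks₂₁ = 0 := by
      have h2 : N.toBlocks₂₁ = (C'*1 + D'*0)*Dᵀ + (C'*(-S) + D'*1)*(-C'ᵀ) := by
        rw [hNdef, show uMat (-S) = Matrix.fromBlocks 1 (-S) 0 1 from rfl,
          fromBlocks_multiply, fromBlocks_multiply, toBlocks_fromBlocks₂₁]
      rw [h2]
      linear_combination (norm := noncomm_ring) p21 - hD * C'ᵀ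
    have e22 : N.toBlocks₂₂ = 1 := by
      have h2 : N.toBlocks₂₂ = (C'*1 + D'*0)*(-Bᵀ) + (C'*(-S) + D'*1)*Aᵀ := by
        rw [hNdef, show uMat (-S) = Matrix.fromBlocks 1 (-S) 0 1 from rfl,
          fromBlocks_multiply, fromBlocks_multiply, toBlocks_fromBlocks₂₂]
      rw [h2]
      linear_combination (norm := noncomm_ring) p22 + hD * Aᵀ
    have hNmem : N ∈ GammaInf := mem_GammaInf_of hNsp e21 e22
    have hrel : Matrix.fromBlocks A' B' C' D'
        = N * Matrix.fromBlocks A B C' D * uMat S := by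
      rw [hNdef]
      calc Matrix.fromBlocks A' B' C' D'
          = Matrix.fromBlocks A' B' C' D' * (uMat (-S) * uMat S) := by
            rw [uMat_mul]; simp [uMat_zero]
        _ = Matrix.fromBlocks A' B' C' D' * uMat (-S) *
              (Matrix.fromBlocks Dᵀ (-Bᵀ) (-C'ᵀ) Aᵀ * Matrix.fromBlocks A B C' D) * uMat S := by
            rw [hinv]; noncomm_ring
        _ = _ := by noncomm_ring
    exact doubleCoset_eq_of_rel' hNmem (uMat_mem_GammaInf hS) hrel
end
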